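/- Let Γ be a deterministic real d×D matrix with ΓΓᵀ = Σ, and let Z₁, Z₂ be independent random vectors in ℝ^D whose 2D coordinates are all i.i.d. with mean 0, variance 1, and finite fourth moment 3 + Δ₄. Set X = ΓZ₁ + μ₁ and Y = ΓZ₂ + μ₂, and δ := μ₁ − μ₂. Then E‖X − Y‖⁴ = 8·Tr(Σ²) + 2Δ₄·Σ_{k=1}^D ((ΓᵀΓ)_{kk})² + 8·δᵀΣδ + (2·Tr(Σ) + ‖δ‖²)². -/

import Mathlib

open MeasureTheory ProbabilityTheory Matrix

lemma aux_abs_pow_le (x : ℝ) {j : ℕ} (hj : j ≤ 4) : |x ^ j| ≤ x ^ 4 + 1 := by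
  rw [abs_pow]
  rcases le_total (|x|) 1 with h | h
  · have h1 : |x| ^ j ≤ 1 := pow_le_one₀ (abs_nonneg x) h
    nlinarith [pow_nonneg (abs_nonneg x) 4, sq_nonneg (x^2)]
  · have h1 : |x| ^ j ≤ |x| ^ 4 := pow_le_pow_right₀ h hj
    have h2 : |x| ^ 4 = x ^ 4 := by
      rw [← abs_pow]; exact abs_of_nonneg (by positivity)
    nlinarith

lemma aux_abs_mul4 (a b c d : ℝ) : |a*b*c*d| ≤ a^4+b^4+c^4+d^4 := by
  rcases abs_cases (a*b*c*d) with ⟨h, _⟩ | ⟨h, _⟩ <;> rw [h] <;>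
    nlinarith [sq_nonneg (a*b - c*d), sq_nonneg (a*b + c*d), sq_nonneg (a^2-b^2),
      sq_nonneg (c^2-d^2), sq_nonneg (a^2+b^2), sq_nonneg (c^2+d^2), sq_nonneg (a*b), sq_nonneg (c*d)]

lemma aux_integrable_pow {Ω : Type*} [MeasurableSpace Ω] {μ : Measure Ω} [IsProbabilityMeasure μ]
    {f : Ω → ℝ} (hf : Measurable f) (h4 : Integrable (fun ω => f ω ^ 4) μ) {j : ℕ} (hj : j ≤ 4) :
    Integrable (fun ω => f ω ^ j) μ := by
  refine Integrable.mono' (h4.add (integrable_const 1)) (hf.pow_const j).aestronglyMeasurable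
    (Filter.Eventually.of_forall fun ω => ?_)
  simpa [Real.norm_eq_abs] using aux_abs_pow_le (f ω) hj

open Finset in
lemma ALG (D : ℕ) (A : Matrix (Fin D) (Fin D) ℝ) (Δ : ℝ) :
    ∑ k, ∑ m, ∑ l, ∑ n, (A k l * A m n) *
      (4 * ((if k = l then (1:ℝ) else 0) * (if m = n then (1:ℝ) else 0)
          + (if k = m then (1:ℝ) else 0) * (if l = n then (1:ℝ) else 0)
          + (if k = n then (1:ℝ) else 0) * (if l = m then (1:ℝ) else 0))
        + 2*Δ*((if k = l then (1:ℝ) else 0) * (if k = m then (1:ℝ) else 0)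
            * (if k = n then (1:ℝ) else 0)))
    = 4*(∑ k, A k k)^2 + 4*(∑ k, ∑ l, A k l * A k l) + 4*(∑ k, ∑ l, A k l * A l k)
      + 2*Δ*(∑ k, A k k * A k k) := by
  have step : ∀ k m, ∑ l, ∑ n, (A k l * A m n) *
      (4 * ((if k = l then (1:ℝ) else 0) * (if m = n then (1:ℝ) else 0)
          + (if k = m then (1:ℝ) else 0) * (if l = n then (1:ℝ) else 0)
          + (if k = n then (1:ℝ) else 0) * (if l = m then (1:ℝ) else 0))
        + 2*Δ*((if k = l then (1:ℝ) else 0) * (if k = m then (1:ℝ) else 0)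
            * (if k = n then (1:ℝ) else 0)))
      = 4 * (A k k * A m m) + (if k = m then (1:ℝ) else 0) * (4 * ∑ l, A k l * A m l)
        + 4 * (A k m * A m k) + (if k = m then (1:ℝ) else 0) * (2*Δ*(A k k * A k k)) := by
    intro k m
    simp only [mul_ite, ite_mul, mul_one, mul_zero, one_mul, zero_mul, mul_add,
      Finset.sum_add_distrib, Finset.sum_ite_eq, Finset.sum_ite_eq', Finset.mem_univ, if_true,
      add_zero, zero_add, Finset.sum_ite_irrel, Finset.sum_const_zero]
    by_cases hkm : k = m
    · subst hkm
      simp only [if_pos rfl, eq_self_iff_true, if_true]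
      rw [← Finset.sum_mul]
      have hsq : (∑ x, A k x ^ 2) = ∑ l, A k l * A k l :=
        Finset.sum_congr rfl fun x _ => by ring
      ring_nf
    · simp only [if_neg hkm]
      ring
  rw [Finset.sum_congr rfl fun k _ => Finset.sum_congr rfl fun m _ => step k m]
  simp only [Finset.sum_add_distrib, ite_mul, one_mul, zero_mul,
    Finset.sum_ite_eq, Finset.mem_univ, if_true]
  have t1 : (∑ k, ∑ m, 4 * (A k k * A m m)) = 4 * ((∑ k, A k k) * (∑ m, A m m)) := by
    simp only [← Finset.mul_sum]
    rw [← Finset.sum_mul]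
  have t2 : (∑ k, 4 * ∑ l, A k l * A k l) = 4 * ∑ k, ∑ l, A k l * A k l := by
    rw [← Finset.mul_sum]
  have t3 : (∑ k, ∑ m, 4 * (A k m * A m k)) = 4 * ∑ k, ∑ l, A k l * A l k := by
    simp only [← Finset.mul_sum]
  have t4 : (∑ k, 2*Δ*(A k k * A k k)) = 2*Δ*(∑ k, A k k * A k k) := by
    rw [← Finset.mul_sum]
  rw [t1, t2, t3, t4]
  ring


section main
variable {Ω : Type*} [MeasurableSpace Ω] {μ : Measure Ω} [IsProbabilityMeasure μ] {D : ℕ}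
  {V : Fin 2 × Fin D → Ω → ℝ}

theorem aux_main (hVmeas : ∀ p, Measurable (V p))
    (hindep : iIndepFun V μ)
    (hident : ∀ p q, IdentDistrib (V p) (V q) μ μ)
    (Δ₄ : ℝ)
    (hmean : ∀ p, ∫ ω, V p ω ∂μ = 0)
    (hvar : ∀ p, ∫ ω, (V p ω) ^ 2 ∂μ = 1)
    (hL4 : ∀ p, Integrable (fun ω => (V p ω) ^ 4) μ)
    (hm4 : ∀ p, ∫ ω, (V p ω) ^ 4 ∂μ = 3 + Δ₄)
    (W : Fin D → Ω → ℝ) (hW : ∀ k ω, W k ω = V (0, k) ω - V (1, k) ω)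
    {d : ℕ} (Γ : Matrix (Fin d) (Fin D) ℝ) (S : Matrix (Fin d) (Fin d) ℝ)
    (hΓ : Γ * Γ.transpose = S) (δ : Fin d → ℝ) (F : Ω → ℝ)
    (hF : ∀ ω, F ω = ∑ i, ((∑ k, Γ i k * W k ω) + δ i) ^ 2) :
    ∫ ω, F ω ^ 2 ∂μ
      = 8 * (S ^ 2).trace + 2 * Δ₄ * (∑ k, ((Γ.transpose * Γ) k k) ^ 2)
        + 8 * (δ ⬝ᵥ S.mulVec δ) + (2 * S.trace + ∑ i, (δ i) ^ 2) ^ 2 := by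
  classical
  have hVpow : ∀ p, ∀ j ≤ 4, Integrable (fun ω => V p ω ^ j) μ :=
    fun p j hj => aux_integrable_pow (hVmeas p) (hL4 p) hj
  have hVint : ∀ p, Integrable (V p) μ := by
    intro p; have := hVpow p 1 (by norm_num); simpa using this
  have hWmeas : ∀ k, Measurable (W k) := by
    intro k
    have : W k = fun ω => V (0,k) ω - V (1,k) ω := funext fun ω => hW k ω
    rw [this]; exact (hVmeas _).sub (hVmeas _)
  have hW4 : ∀ k, Integrable (fun ω => W k ω ^ 4) μ := by
    intro k
    refine Integrable.mono' (((hL4 (0,k)).const_mul 8).add ((hL4 (1,k)).const_mul 8))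
      ((hWmeas k).pow_const 4).aestronglyMeasurable (Filter.Eventually.of_forall fun ω => ?_)
    rw [Real.norm_eq_abs, abs_of_nonneg (by positivity), hW]
    simp only [Pi.add_apply]
    nlinarith [sq_nonneg (V (0,k) ω + V (1,k) ω), sq_nonneg (V (0,k) ω - V (1,k) ω),
      sq_nonneg ((V (0,k) ω)^2 - (V (1,k) ω)^2), sq_nonneg ((V (0,k) ω)^2 + (V (1,k) ω)^2)]
  have hWpow : ∀ k, ∀ j ≤ 4, Integrable (fun ω => W k ω ^ j) μ :=
    fun k j hj => aux_integrable_pow (hWmeas k) (hW4 k) hj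
  have hWint : ∀ k, Integrable (W k) μ := by
    intro k; have := hWpow k 1 (by norm_num); simpa using this
  -- integrability of monomials
  have hM4 : ∀ k l m n, Integrable (fun ω => W k ω * W l ω * W m ω * W n ω) μ := by
    intro k l m n
    refine Integrable.mono' ((((hW4 k).add (hW4 l)).add (hW4 m)).add (hW4 n))
      (((((hWmeas k).mul (hWmeas l)).mul (hWmeas m)).mul (hWmeas n)).aestronglyMeasurable)
      (Filter.Eventually.of_forall fun ω => ?_)
    rw [Real.norm_eq_abs]
    simp only [Pi.add_apply]
    exact (aux_abs_mul4 _ _ _ _).trans (by norm_num)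
  have hM3 : ∀ k l m, Integrable (fun ω => W k ω * W l ω * W m ω) μ := by
    intro k l m
    refine Integrable.mono' ((((hW4 k).add (hW4 l)).add (hW4 m)).add (integrable_const 1))
      ((((hWmeas k).mul (hWmeas l)).mul (hWmeas m)).aestronglyMeasurable)
      (Filter.Eventually.of_forall fun ω => ?_)
    rw [Real.norm_eq_abs]
    have := aux_abs_mul4 (W k ω) (W l ω) (W m ω) 1
    simp only [mul_one, one_pow] at this
    simp only [Pi.add_apply]
    linarith
  have hM2 : ∀ k l, Integrable (fun ω => W k ω * W l ω) μ := by
    intro k l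
    refine Integrable.mono' (((hW4 k).add (hW4 l)).add (integrable_const 2))
      (((hWmeas k).mul (hWmeas l)).aestronglyMeasurable)
      (Filter.Eventually.of_forall fun ω => ?_)
    rw [Real.norm_eq_abs]
    have := aux_abs_mul4 (W k ω) (W l ω) 1 1
    simp only [mul_one, one_pow] at this
    simp only [Pi.add_apply]
    linarith
  -- pair independence
  have hWpair : ∀ k l, k ≠ l → IndepFun (W k) (W l) μ := by
    intro k l hkl
    set Sf : Finset (Fin 2 × Fin D) := {(0,k),(1,k)} with hSf
    set Tf : Finset (Fin 2 × Fin D) := {(0,l),(1,l)} with hTf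
    have hST : Disjoint Sf Tf := by
      rw [Finset.disjoint_left]
      rintro ⟨i, j⟩ hS' hT'
      simp only [hSf, hTf, Finset.mem_insert, Finset.mem_singleton, Prod.mk.injEq] at hS' hT'
      rcases hT' with ⟨-, rfl⟩ | ⟨-, rfl⟩ <;> rcases hS' with ⟨-, h⟩ | ⟨-, h⟩ <;> exact hkl h.symm
    have h := hindep.indepFun_finset Sf Tf hST hVmeas
    have m1 : ((0:Fin 2),k) ∈ Sf := by simp [hSf]
    have m2 : ((1:Fin 2),k) ∈ Sf := by simp [hSf]
    have n1 : ((0:Fin 2),l) ∈ Tf := by simp [hTf]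
    have n2 : ((1:Fin 2),l) ∈ Tf := by simp [hTf]
    have hφ : Measurable (fun v : (i : Sf) → ℝ =>
        v ⟨((0:Fin 2),k), m1⟩ - v ⟨((1:Fin 2),k), m2⟩) := by fun_prop
    have hψ : Measurable (fun v : (i : Tf) → ℝ =>
        v ⟨((0:Fin 2),l), n1⟩ - v ⟨((1:Fin 2),l), n2⟩) := by fun_prop
    have h2 := h.comp hφ hψ
    have e1 : (fun v : (i : Sf) → ℝ => v ⟨((0:Fin 2),k), m1⟩ - v ⟨((1:Fin 2),k), m2⟩)
        ∘ (fun a (i : Sf) => V i a) = W k := by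
      funext ω; simp [Function.comp, hW]
    have e2 : (fun v : (i : Tf) → ℝ => v ⟨((0:Fin 2),l), n1⟩ - v ⟨((1:Fin 2),l), n2⟩)
        ∘ (fun a (i : Tf) => V i a) = W l := by
      funext ω; simp [Function.comp, hW]
    rwa [e1, e2] at h2
  have hG3 : ∀ (k l m : Fin D), k ≠ m → l ≠ m →
      IndepFun (fun ω => W k ω * W l ω) (W m) μ := by
    intro k l m hkm hlm
    set Sf : Finset (Fin 2 × Fin D) := {(0,k),(1,k),(0,l),(1,l)} with hSf
    set Tf : Finset (Fin 2 × Fin D) := {(0,m),(1,m)} with hTf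
    have hST : Disjoint Sf Tf := by
      rw [Finset.disjoint_left]
      rintro ⟨i, j⟩ hS' hT'
      simp only [hSf, hTf, Finset.mem_insert, Finset.mem_singleton, Prod.mk.injEq] at hS' hT'
      rcases hT' with ⟨-, rfl⟩ | ⟨-, rfl⟩ <;>
        rcases hS' with ⟨-, h⟩ | ⟨-, h⟩ | ⟨-, h⟩ | ⟨-, h⟩ <;>
        first | exact hkm h.symm | exact hlm h.symm
    have h := hindep.indepFun_finset Sf Tf hST hVmeas
    have m1 : ((0:Fin 2),k) ∈ Sf := by simp [hSf]
    have m2 : ((1:Fin 2),k) ∈ Sf := by simp [hSf]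
    have m3 : ((0:Fin 2),l) ∈ Sf := by simp [hSf]
    have m4 : ((1:Fin 2),l) ∈ Sf := by simp [hSf]
    have n1 : ((0:Fin 2),m) ∈ Tf := by simp [hTf]
    have n2 : ((1:Fin 2),m) ∈ Tf := by simp [hTf]
    have hφ : Measurable (fun v : (i : Sf) → ℝ =>
        (v ⟨((0:Fin 2),k), m1⟩ - v ⟨((1:Fin 2),k), m2⟩) *
        (v ⟨((0:Fin 2),l), m3⟩ - v ⟨((1:Fin 2),l), m4⟩)) := by fun_prop
    have hψ : Measurable (fun v : (i : Tf) → ℝ =>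
        v ⟨((0:Fin 2),m), n1⟩ - v ⟨((1:Fin 2),m), n2⟩) := by fun_prop
    have h2 := h.comp hφ hψ
    have e1 : (fun v : (i : Sf) → ℝ =>
        (v ⟨((0:Fin 2),k), m1⟩ - v ⟨((1:Fin 2),k), m2⟩) *
        (v ⟨((0:Fin 2),l), m3⟩ - v ⟨((1:Fin 2),l), m4⟩)) ∘ (fun a (i : Sf) => V i a)
        = fun ω => W k ω * W l ω := by
      funext ω; simp [Function.comp, hW]
    have e2 : (fun v : (i : Tf) → ℝ => v ⟨((0:Fin 2),m), n1⟩ - v ⟨((1:Fin 2),m), n2⟩)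
        ∘ (fun a (i : Tf) => V i a) = W m := by
      funext ω; simp [Function.comp, hW]
    rwa [e1, e2] at h2
  have hG4 : ∀ (k l m n : Fin D), k ≠ n → l ≠ n → m ≠ n →
      IndepFun (fun ω => W k ω * W l ω * W m ω) (W n) μ := by
    intro k l m n hkn hln hmn
    set Sf : Finset (Fin 2 × Fin D) := {(0,k),(1,k),(0,l),(1,l),(0,m),(1,m)} with hSf
    set Tf : Finset (Fin 2 × Fin D) := {(0,n),(1,n)} with hTf
    have hST : Disjoint Sf Tf := by
      rw [Finset.disjoint_left]
      rintro ⟨i, j⟩ hS' hT'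
      simp only [hSf, hTf, Finset.mem_insert, Finset.mem_singleton, Prod.mk.injEq] at hS' hT'
      rcases hT' with ⟨-, rfl⟩ | ⟨-, rfl⟩ <;>
        rcases hS' with ⟨-, h⟩ | ⟨-, h⟩ | ⟨-, h⟩ | ⟨-, h⟩ | ⟨-, h⟩ | ⟨-, h⟩ <;>
        first | exact hkn h.symm | exact hln h.symm | exact hmn h.symm
    have h := hindep.indepFun_finset Sf Tf hST hVmeas
    have m1 : ((0:Fin 2),k) ∈ Sf := by simp [hSf]
    have m2 : ((1:Fin 2),k) ∈ Sf := by simp [hSf]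
    have m3 : ((0:Fin 2),l) ∈ Sf := by simp [hSf]
    have m4 : ((1:Fin 2),l) ∈ Sf := by simp [hSf]
    have m5 : ((0:Fin 2),m) ∈ Sf := by simp [hSf]
    have m6 : ((1:Fin 2),m) ∈ Sf := by simp [hSf]
    have n1 : ((0:Fin 2),n) ∈ Tf := by simp [hTf]
    have n2 : ((1:Fin 2),n) ∈ Tf := by simp [hTf]
    have hφ : Measurable (fun v : (i : Sf) → ℝ =>
        (v ⟨((0:Fin 2),k), m1⟩ - v ⟨((1:Fin 2),k), m2⟩) *
        (v ⟨((0:Fin 2),l), m3⟩ - v ⟨((1:Fin 2),l), m4⟩) *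
        (v ⟨((0:Fin 2),m), m5⟩ - v ⟨((1:Fin 2),m), m6⟩)) := by fun_prop
    have hψ : Measurable (fun v : (i : Tf) → ℝ =>
        v ⟨((0:Fin 2),n), n1⟩ - v ⟨((1:Fin 2),n), n2⟩) := by fun_prop
    have h2 := h.comp hφ hψ
    have e1 : (fun v : (i : Sf) → ℝ =>
        (v ⟨((0:Fin 2),k), m1⟩ - v ⟨((1:Fin 2),k), m2⟩) *
        (v ⟨((0:Fin 2),l), m3⟩ - v ⟨((1:Fin 2),l), m4⟩) *
        (v ⟨((0:Fin 2),m), m5⟩ - v ⟨((1:Fin 2),m), m6⟩)) ∘ (fun a (i : Sf) => V i a)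
        = fun ω => W k ω * W l ω * W m ω := by
      funext ω; simp [Function.comp, hW]
    have e2 : (fun v : (i : Tf) → ℝ => v ⟨((0:Fin 2),n), n1⟩ - v ⟨((1:Fin 2),n), n2⟩)
        ∘ (fun a (i : Tf) => V i a) = W n := by
      funext ω; simp [Function.comp, hW]
    rwa [e1, e2] at h2
  -- V product facts
  have hne2 : ∀ k : Fin D, ((0:Fin 2), k) ≠ ((1:Fin 2), k) := by
    intro k h
    have := congrArg Prod.fst h
    simp at this
  have hVmul : ∀ (p q : Fin 2 × Fin D) (a b : ℕ), p ≠ q → a ≤ 4 → b ≤ 4 →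
      Integrable (fun ω => V p ω ^ a * V q ω ^ b) μ := fun p q a b hpq ha hb =>
    ((hindep.indepFun hpq).comp (measurable_id.pow_const a)
      (measurable_id.pow_const b)).integrable_mul (hVpow p a ha) (hVpow q b hb)
  have hVsplit : ∀ (p q : Fin 2 × Fin D) (a b : ℕ), p ≠ q → a ≤ 4 → b ≤ 4 →
      ∫ ω, V p ω ^ a * V q ω ^ b ∂μ = (∫ ω, V p ω ^ a ∂μ) * ∫ ω, V q ω ^ b ∂μ :=
    fun p q a b hpq ha hb =>
    ((hindep.indepFun hpq).comp (measurable_id.pow_const a)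
      (measurable_id.pow_const b)).integral_fun_mul_eq_mul_integral (hVpow p a ha).aestronglyMeasurable (hVpow q b hb).aestronglyMeasurable
  have hVm3eq : ∀ k : Fin D, ∫ ω, V (0,k) ω ^ 3 ∂μ = ∫ ω, V (1,k) ω ^ 3 ∂μ := fun k =>
    ((hident (0,k) (1,k)).comp (measurable_id.pow_const 3)).integral_eq
  -- moments of W
  have MW1 : ∀ k, ∫ ω, W k ω ∂μ = 0 := by
    intro k
    have he : (fun ω => W k ω) = fun ω => V (0,k) ω - V (1,k) ω := funext fun ω => hW k ω
    rw [he, integral_sub (hVint _) (hVint _), hmean, hmean, sub_zero]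
  have MW2 : ∀ k, ∫ ω, W k ω * W k ω ∂μ = 2 := by
    intro k
    have he : (fun ω => W k ω * W k ω)
        = fun ω => (V (0,k) ω ^ 2 + V (1,k) ω ^ 2) - 2 * (V (0,k) ω ^ 1 * V (1,k) ω ^ 1) := by
      funext ω; rw [hW]; ring
    have i1 : Integrable (fun ω => V (0,k) ω ^ 2 + V (1,k) ω ^ 2) μ :=
      (hVpow _ 2 (by norm_num)).add (hVpow _ 2 (by norm_num))
    have i2 : Integrable (fun ω => 2 * (V (0,k) ω ^ 1 * V (1,k) ω ^ 1)) μ :=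
      (hVmul _ _ 1 1 (hne2 k) (by norm_num) (by norm_num)).const_mul 2
    have e1 : ∫ ω, ((V (0,k) ω ^ 2 + V (1,k) ω ^ 2) - 2 * (V (0,k) ω ^ 1 * V (1,k) ω ^ 1)) ∂μ
        = (∫ ω, (V (0,k) ω ^ 2 + V (1,k) ω ^ 2) ∂μ)
          - ∫ ω, 2 * (V (0,k) ω ^ 1 * V (1,k) ω ^ 1) ∂μ := integral_sub i1 i2
    have e2 : ∫ ω, (V (0,k) ω ^ 2 + V (1,k) ω ^ 2) ∂μ
        = (∫ ω, V (0,k) ω ^ 2 ∂μ) + ∫ ω, V (1,k) ω ^ 2 ∂μ :=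
      integral_add (hVpow _ 2 (by norm_num)) (hVpow _ 2 (by norm_num))
    have e3 : ∫ ω, 2 * (V (0,k) ω ^ 1 * V (1,k) ω ^ 1) ∂μ
        = 2 * ∫ ω, V (0,k) ω ^ 1 * V (1,k) ω ^ 1 ∂μ := integral_const_mul 2 _
    rw [he, e1, e2, e3, hVsplit _ _ 1 1 (hne2 k) (by norm_num) (by norm_num)]
    simp only [pow_one]
    rw [hvar, hvar, hmean, hmean]
    norm_num
  have MW3 : ∀ k, ∫ ω, W k ω * W k ω * W k ω ∂μ = 0 := by
    intro k
    have he : (fun ω => W k ω * W k ω * W k ω)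
        = fun ω => (V (0,k) ω ^ 3 + 3 * (V (0,k) ω ^ 1 * V (1,k) ω ^ 2))
            - (3 * (V (0,k) ω ^ 2 * V (1,k) ω ^ 1) + V (1,k) ω ^ 3) := by
      funext ω; rw [hW]; ring
    have i1 : Integrable (fun ω => V (0,k) ω ^ 3 + 3 * (V (0,k) ω ^ 1 * V (1,k) ω ^ 2)) μ :=
      (hVpow _ 3 (by norm_num)).add
        ((hVmul _ _ 1 2 (hne2 k) (by norm_num) (by norm_num)).const_mul 3)
    have i2 : Integrable (fun ω => 3 * (V (0,k) ω ^ 2 * V (1,k) ω ^ 1) + V (1,k) ω ^ 3) μ :=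
      ((hVmul _ _ 2 1 (hne2 k) (by norm_num) (by norm_num)).const_mul 3).add
        (hVpow _ 3 (by norm_num))
    have e1 : ∫ ω, ((V (0,k) ω ^ 3 + 3 * (V (0,k) ω ^ 1 * V (1,k) ω ^ 2))
            - (3 * (V (0,k) ω ^ 2 * V (1,k) ω ^ 1) + V (1,k) ω ^ 3)) ∂μ
        = (∫ ω, (V (0,k) ω ^ 3 + 3 * (V (0,k) ω ^ 1 * V (1,k) ω ^ 2)) ∂μ)
          - ∫ ω, (3 * (V (0,k) ω ^ 2 * V (1,k) ω ^ 1) + V (1,k) ω ^ 3) ∂μ := integral_sub i1 i2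
    have e2 : ∫ ω, (V (0,k) ω ^ 3 + 3 * (V (0,k) ω ^ 1 * V (1,k) ω ^ 2)) ∂μ
        = (∫ ω, V (0,k) ω ^ 3 ∂μ) + ∫ ω, 3 * (V (0,k) ω ^ 1 * V (1,k) ω ^ 2) ∂μ :=
      integral_add (hVpow _ 3 (by norm_num))
        ((hVmul _ _ 1 2 (hne2 k) (by norm_num) (by norm_num)).const_mul 3)
    have e3 : ∫ ω, (3 * (V (0,k) ω ^ 2 * V (1,k) ω ^ 1) + V (1,k) ω ^ 3) ∂μ
        = (∫ ω, 3 * (V (0,k) ω ^ 2 * V (1,k) ω ^ 1) ∂μ) + ∫ ω, V (1,k) ω ^ 3 ∂μ :=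
      integral_add ((hVmul _ _ 2 1 (hne2 k) (by norm_num) (by norm_num)).const_mul 3)
        (hVpow _ 3 (by norm_num))
    have e4 : ∫ ω, 3 * (V (0,k) ω ^ 1 * V (1,k) ω ^ 2) ∂μ
        = 3 * ∫ ω, V (0,k) ω ^ 1 * V (1,k) ω ^ 2 ∂μ := integral_const_mul 3 _
    have e5 : ∫ ω, 3 * (V (0,k) ω ^ 2 * V (1,k) ω ^ 1) ∂μ
        = 3 * ∫ ω, V (0,k) ω ^ 2 * V (1,k) ω ^ 1 ∂μ := integral_const_mul 3 _
    rw [he, e1, e2, e3, e4, e5, hVsplit _ _ 1 2 (hne2 k) (by norm_num) (by norm_num),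
      hVsplit _ _ 2 1 (hne2 k) (by norm_num) (by norm_num)]
    simp only [pow_one]
    rw [hmean, hmean, hVm3eq k]
    ring
  have MW4 : ∀ k, ∫ ω, W k ω * W k ω * W k ω * W k ω ∂μ = 12 + 2 * Δ₄ := by
    intro k
    have he : (fun ω => W k ω * W k ω * W k ω * W k ω)
        = fun ω => ((V (0,k) ω ^ 4 + V (1,k) ω ^ 4) + 6 * (V (0,k) ω ^ 2 * V (1,k) ω ^ 2))
            - (4 * (V (0,k) ω ^ 3 * V (1,k) ω ^ 1) + 4 * (V (0,k) ω ^ 1 * V (1,k) ω ^ 3)) := by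
      funext ω; rw [hW]; ring
    have i1 : Integrable (fun ω => (V (0,k) ω ^ 4 + V (1,k) ω ^ 4)
        + 6 * (V (0,k) ω ^ 2 * V (1,k) ω ^ 2)) μ :=
      ((hL4 _).add (hL4 _)).add
        ((hVmul _ _ 2 2 (hne2 k) (by norm_num) (by norm_num)).const_mul 6)
    have i2 : Integrable (fun ω => 4 * (V (0,k) ω ^ 3 * V (1,k) ω ^ 1)
        + 4 * (V (0,k) ω ^ 1 * V (1,k) ω ^ 3)) μ :=
      ((hVmul _ _ 3 1 (hne2 k) (by norm_num) (by norm_num)).const_mul 4).add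
        ((hVmul _ _ 1 3 (hne2 k) (by norm_num) (by norm_num)).const_mul 4)
    have e1 : ∫ ω, (((V (0,k) ω ^ 4 + V (1,k) ω ^ 4) + 6 * (V (0,k) ω ^ 2 * V (1,k) ω ^ 2))
            - (4 * (V (0,k) ω ^ 3 * V (1,k) ω ^ 1) + 4 * (V (0,k) ω ^ 1 * V (1,k) ω ^ 3))) ∂μ
        = (∫ ω, ((V (0,k) ω ^ 4 + V (1,k) ω ^ 4) + 6 * (V (0,k) ω ^ 2 * V (1,k) ω ^ 2)) ∂μ)
          - ∫ ω, (4 * (V (0,k) ω ^ 3 * V (1,k) ω ^ 1)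
              + 4 * (V (0,k) ω ^ 1 * V (1,k) ω ^ 3)) ∂μ := integral_sub i1 i2
    have e2 : ∫ ω, ((V (0,k) ω ^ 4 + V (1,k) ω ^ 4) + 6 * (V (0,k) ω ^ 2 * V (1,k) ω ^ 2)) ∂μ
        = (∫ ω, (V (0,k) ω ^ 4 + V (1,k) ω ^ 4) ∂μ)
          + ∫ ω, 6 * (V (0,k) ω ^ 2 * V (1,k) ω ^ 2) ∂μ :=
      integral_add ((hL4 _).add (hL4 _))
        ((hVmul _ _ 2 2 (hne2 k) (by norm_num) (by norm_num)).const_mul 6)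
    have e3 : ∫ ω, (V (0,k) ω ^ 4 + V (1,k) ω ^ 4) ∂μ
        = (∫ ω, V (0,k) ω ^ 4 ∂μ) + ∫ ω, V (1,k) ω ^ 4 ∂μ := integral_add (hL4 _) (hL4 _)
    have e4 : ∫ ω, (4 * (V (0,k) ω ^ 3 * V (1,k) ω ^ 1)
            + 4 * (V (0,k) ω ^ 1 * V (1,k) ω ^ 3)) ∂μ
        = (∫ ω, 4 * (V (0,k) ω ^ 3 * V (1,k) ω ^ 1) ∂μ)
          + ∫ ω, 4 * (V (0,k) ω ^ 1 * V (1,k) ω ^ 3) ∂μ :=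
      integral_add ((hVmul _ _ 3 1 (hne2 k) (by norm_num) (by norm_num)).const_mul 4)
        ((hVmul _ _ 1 3 (hne2 k) (by norm_num) (by norm_num)).const_mul 4)
    have e5 : ∫ ω, 6 * (V (0,k) ω ^ 2 * V (1,k) ω ^ 2) ∂μ
        = 6 * ∫ ω, V (0,k) ω ^ 2 * V (1,k) ω ^ 2 ∂μ := integral_const_mul 6 _
    have e6 : ∫ ω, 4 * (V (0,k) ω ^ 3 * V (1,k) ω ^ 1) ∂μ
        = 4 * ∫ ω, V (0,k) ω ^ 3 * V (1,k) ω ^ 1 ∂μ := integral_const_mul 4 _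
    have e7 : ∫ ω, 4 * (V (0,k) ω ^ 1 * V (1,k) ω ^ 3) ∂μ
        = 4 * ∫ ω, V (0,k) ω ^ 1 * V (1,k) ω ^ 3 ∂μ := integral_const_mul 4 _
    rw [he, e1, e2, e3, e4, e5, e6, e7,
      hVsplit _ _ 2 2 (hne2 k) (by norm_num) (by norm_num),
      hVsplit _ _ 3 1 (hne2 k) (by norm_num) (by norm_num),
      hVsplit _ _ 1 3 (hne2 k) (by norm_num) (by norm_num)]
    simp only [pow_one]
    rw [hm4, hm4, hvar, hvar, hmean, hmean]
    ring
  -- split/zero lemmas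
  have hZ3 : ∀ k l m, k ≠ m → l ≠ m → ∫ ω, W k ω * W l ω * W m ω ∂μ = 0 := by
    intro k l m hkm hlm
    have e : ∫ ω, W k ω * W l ω * W m ω ∂μ = (∫ ω, W k ω * W l ω ∂μ) * ∫ ω, W m ω ∂μ :=
      (hG3 k l m hkm hlm).integral_fun_mul_eq_mul_integral (hM2 k l).aestronglyMeasurable (hWint m).aestronglyMeasurable
    rw [e, MW1, mul_zero]
  have hZ4 : ∀ k l m n, k ≠ n → l ≠ n → m ≠ n →
      ∫ ω, W k ω * W l ω * W m ω * W n ω ∂μ = 0 := by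
    intro k l m n hkn hln hmn
    have e : ∫ ω, W k ω * W l ω * W m ω * W n ω ∂μ
        = (∫ ω, W k ω * W l ω * W m ω ∂μ) * ∫ ω, W n ω ∂μ :=
      (hG4 k l m n hkn hln hmn).integral_fun_mul_eq_mul_integral (hM3 k l m).aestronglyMeasurable (hWint n).aestronglyMeasurable
    rw [e, MW1, mul_zero]
  have hP22 : ∀ k m, k ≠ m → ∫ ω, W k ω * W k ω * (W m ω * W m ω) ∂μ = 4 := by
    intro k m hkm
    have hind : IndepFun (fun ω => W k ω * W k ω) (fun ω => W m ω * W m ω) μ :=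
      (hWpair k m hkm).comp (measurable_id.mul measurable_id) (measurable_id.mul measurable_id)
    have e : ∫ ω, W k ω * W k ω * (W m ω * W m ω) ∂μ
        = (∫ ω, W k ω * W k ω ∂μ) * ∫ ω, W m ω * W m ω ∂μ :=
      hind.integral_fun_mul_eq_mul_integral (hM2 k k).aestronglyMeasurable (hM2 m m).aestronglyMeasurable
    rw [e, MW2, MW2]
    norm_num
  set e : Fin D → Fin D → ℝ := fun a b => if a = b then 1 else 0 with hedef
  have hEW2 : ∀ k l, ∫ ω, W k ω * W l ω ∂μ = 2 * e k l := by
    intro k l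
    by_cases h : k = l
    · subst h; rw [MW2]; simp [hedef]
    · have e0 : ∫ ω, W k ω * W l ω ∂μ = (∫ ω, W k ω ∂μ) * ∫ ω, W l ω ∂μ :=
        (hWpair k l h).integral_fun_mul_eq_mul_integral (hWint k).aestronglyMeasurable (hWint l).aestronglyMeasurable
      rw [e0, MW1, zero_mul]; simp [hedef, h]
  have hEW3 : ∀ k l m, ∫ ω, W k ω * W l ω * W m ω ∂μ = 0 := by
    intro k l m
    by_cases hkm : k = m
    · subst hkm
      by_cases hlk : l = k
      · subst hlk; exact MW3 l
      · have he : (fun ω => W k ω * W l ω * W k ω) = fun ω => W k ω * W k ω * W l ω :=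
          funext fun ω => by ring
        rw [he, hZ3 k k l (fun h => hlk h.symm) (fun h => hlk h.symm)]
    · by_cases hlm : l = m
      · subst hlm
        have he : (fun ω => W k ω * W l ω * W l ω) = fun ω => W l ω * W l ω * W k ω :=
          funext fun ω => by ring
        rw [he, hZ3 l l k (fun h => hkm h.symm) (fun h => hkm h.symm)]
      · exact hZ3 k l m hkm hlm
  have hEW4 : ∀ k l m n, ∫ ω, W k ω * W l ω * W m ω * W n ω ∂μ
      = 4 * (e k l * e m n + e k m * e l n + e k n * e l m) + 2 * Δ₄ * (e k l * e k m * e k n) := by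
    intro k l m n
    by_cases hkl : k = l
    · subst hkl
      by_cases hkm : k = m
      · subst hkm
        by_cases hkn : k = n
        · subst hkn
          rw [MW4]; simp [hedef]; ring
        · rw [hZ4 k k k n hkn hkn hkn]; simp [hedef, hkn]
      · by_cases hkn : k = n
        · subst hkn
          have he : (fun ω => W k ω * W k ω * W m ω * W k ω)
              = fun ω => W k ω * W k ω * W k ω * W m ω := funext fun ω => by ring
          rw [he, hZ4 k k k m hkm hkm hkm]; simp [hedef, hkm, Ne.symm hkm]
        · by_cases hmn : m = n
          · subst hmn
            have he : (fun ω => W k ω * W k ω * W m ω * W m ω)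
                = fun ω => W k ω * W k ω * (W m ω * W m ω) := funext fun ω => by ring
            rw [he, hP22 k m hkm]; simp [hedef, hkm, hkn]
          · rw [hZ4 k k m n hkn hkn hmn]; simp [hedef, hkn, hmn]
    · by_cases hkm : k = m
      · subst hkm
        by_cases hkn : k = n
        · subst hkn
          have he : (fun ω => W k ω * W l ω * W k ω * W k ω)
              = fun ω => W k ω * W k ω * W k ω * W l ω := funext fun ω => by ring
          rw [he, hZ4 k k k l (fun h => hkl h) (fun h => hkl h) (fun h => hkl h)]
          simp [hedef, hkl, Ne.symm hkl]
        · by_cases hln : l = n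
          · subst hln
            have he : (fun ω => W k ω * W l ω * W k ω * W l ω)
                = fun ω => W k ω * W k ω * (W l ω * W l ω) := funext fun ω => by ring
            rw [he, hP22 k l hkl]; simp [hedef, hkl, hkn]
          · rw [hZ4 k l k n hkn hln hkn]; simp [hedef, hkl, hln, hkn]
      · by_cases hkn : k = n
        · subst hkn
          by_cases hlm : l = m
          · subst hlm
            have he : (fun ω => W k ω * W l ω * W l ω * W k ω)
                = fun ω => W k ω * W k ω * (W l ω * W l ω) := funext fun ω => by ring
            rw [he, hP22 k l hkl]; simp [hedef, hkl, hkm, Ne.symm hkl]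
          · have he : (fun ω => W k ω * W l ω * W m ω * W k ω)
                = fun ω => W k ω * W k ω * W l ω * W m ω := funext fun ω => by ring
            rw [he, hZ4 k k l m hkm hkm hlm]
            simp [hedef, hkl, hkm, hlm]
        · have he : (fun ω => W k ω * W l ω * W m ω * W n ω)
              = fun ω => W l ω * W m ω * W n ω * W k ω := funext fun ω => by ring
          rw [he, hZ4 l m n k (fun h => hkl h.symm) (fun h => hkm h.symm) (fun h => hkn h.symm)]
          simp [hedef, hkl, hkm, hkn]
  -- the quadratic form
  set A : Matrix (Fin D) (Fin D) ℝ := Γ.transpose * Γ with hAdef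
  set bb : Fin D → ℝ := Γ.transpose.mulVec δ with hbdef
  set c : ℝ := ∑ i, δ i ^ 2 with hcdef
  set Q : Ω → ℝ := fun ω => ∑ k, ∑ l, A k l * (W k ω * W l ω) with hQdef
  set L : Ω → ℝ := fun ω => ∑ k, bb k * W k ω with hLdef
  have hA' : ∀ k l, A k l = ∑ i, Γ i k * Γ i l := by
    intro k l
    rw [hAdef]
    simp [Matrix.mul_apply, Matrix.transpose_apply]
  have hAsym : ∀ k l, A k l = A l k := by
    intro k l; rw [hA', hA']; exact Finset.sum_congr rfl fun i _ => mul_comm _ _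
  have hb' : ∀ k, bb k = ∑ i, Γ i k * δ i := by
    intro k
    rw [hbdef]
    simp [Matrix.mulVec, dotProduct, Matrix.transpose_apply]
  have hFQ : ∀ ω, F ω = Q ω + 2 * L ω + c := by
    intro ω
    rw [hF ω]
    have hs : ∀ i : Fin d, ((∑ k, Γ i k * W k ω) + δ i) ^ 2
        = (∑ k, ∑ l, (Γ i k * Γ i l) * (W k ω * W l ω))
          + 2 * (∑ k, (Γ i k * δ i) * W k ω) + δ i ^ 2 := by
      intro i
      have h1 : (∑ k, Γ i k * W k ω) * (∑ k, Γ i k * W k ω)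
          = ∑ k, ∑ l, (Γ i k * Γ i l) * (W k ω * W l ω) := by
        rw [Finset.sum_mul_sum]
        exact Finset.sum_congr rfl fun k _ => Finset.sum_congr rfl fun l _ => by ring
      have h2 : δ i * (∑ k, Γ i k * W k ω) = ∑ k, (Γ i k * δ i) * W k ω := by
        rw [Finset.mul_sum]
        exact Finset.sum_congr rfl fun k _ => by ring
      calc ((∑ k, Γ i k * W k ω) + δ i) ^ 2
          = (∑ k, Γ i k * W k ω) * (∑ k, Γ i k * W k ω)
            + 2 * (δ i * (∑ k, Γ i k * W k ω)) + δ i ^ 2 := by ring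
        _ = _ := by rw [h1, h2]
    rw [Finset.sum_congr rfl fun i _ => hs i, Finset.sum_add_distrib, Finset.sum_add_distrib]
    congr 1
    · congr 1
      · simp only [hQdef]
        rw [Finset.sum_comm]
        refine Finset.sum_congr rfl fun k _ => ?_
        rw [Finset.sum_comm]
        refine Finset.sum_congr rfl fun l _ => ?_
        rw [← Finset.sum_mul, ← hA' k l]
      · simp only [hLdef]
        rw [← Finset.mul_sum]
        congr 1
        rw [Finset.sum_comm]
        refine Finset.sum_congr rfl fun k _ => ?_
        rw [← Finset.sum_mul, ← hb' k]
  -- integrability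
  have hQint : Integrable Q μ := by
    simp only [hQdef]
    exact integrable_finset_sum _ fun k _ =>
      integrable_finset_sum _ fun l _ => (hM2 k l).const_mul _
  have hLint : Integrable L μ := by
    simp only [hLdef]
    exact integrable_finset_sum _ fun k _ => (hWint k).const_mul _
  have heLL : (fun ω => L ω * L ω) = fun ω => ∑ k, ∑ l, (bb k * bb l) * (W k ω * W l ω) := by
    funext ω
    simp only [hLdef]
    rw [Finset.sum_mul_sum]
    exact Finset.sum_congr rfl fun k _ => Finset.sum_congr rfl fun l _ => by ring
  have heQL : (fun ω => Q ω * L ω)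
      = fun ω => ∑ k, ∑ l, ∑ m, (A k l * bb m) * (W k ω * W l ω * W m ω) := by
    funext ω
    simp only [hQdef, hLdef]
    rw [Finset.sum_mul]
    refine Finset.sum_congr rfl fun k _ => ?_
    rw [Finset.sum_mul]
    refine Finset.sum_congr rfl fun l _ => ?_
    rw [Finset.mul_sum]
    exact Finset.sum_congr rfl fun m _ => by ring
  have heQQ : (fun ω => Q ω * Q ω) = fun ω => ∑ k, ∑ m, ∑ l, ∑ n,
      (A k l * A m n) * (W k ω * W l ω * W m ω * W n ω) := by
    funext ω
    simp only [hQdef]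
    rw [Finset.sum_mul_sum]
    refine Finset.sum_congr rfl fun k _ => ?_
    refine Finset.sum_congr rfl fun m _ => ?_
    rw [Finset.sum_mul_sum]
    exact Finset.sum_congr rfl fun l _ => Finset.sum_congr rfl fun n _ => by ring
  have hLLint : Integrable (fun ω => L ω * L ω) μ := by
    rw [heLL]
    exact integrable_finset_sum _ fun k _ =>
      integrable_finset_sum _ fun l _ => (hM2 k l).const_mul _
  have hQLint : Integrable (fun ω => Q ω * L ω) μ := by
    rw [heQL]
    exact integrable_finset_sum _ fun k _ => integrable_finset_sum _ fun l _ =>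
      integrable_finset_sum _ fun m _ => (hM3 k l m).const_mul _
  have hQQint : Integrable (fun ω => Q ω * Q ω) μ := by
    rw [heQQ]
    exact integrable_finset_sum _ fun k _ => integrable_finset_sum _ fun m _ =>
      integrable_finset_sum _ fun l _ =>
        integrable_finset_sum _ fun n _ => (hM4 k l m n).const_mul _
  -- values
  have hQval : ∫ ω, Q ω ∂μ = 2 * A.trace := by
    simp only [hQdef]
    rw [integral_finset_sum _ fun k _ =>
      integrable_finset_sum _ fun l _ => (hM2 k l).const_mul (A k l)]
    have hk : ∀ k : Fin D, ∫ ω, ∑ l, A k l * (W k ω * W l ω) ∂μ = 2 * A k k := by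
      intro k
      rw [integral_finset_sum _ fun l _ => (hM2 k l).const_mul (A k l)]
      have hl : ∀ l, ∫ ω, A k l * (W k ω * W l ω) ∂μ = A k l * (2 * e k l) := fun l => by
        rw [integral_const_mul, hEW2]
      rw [Finset.sum_congr rfl fun l _ => hl l]
      simp [hedef, mul_ite, Finset.sum_ite_eq, mul_comm]
    rw [Finset.sum_congr rfl fun k _ => hk k, ← Finset.mul_sum]
    congr 1
  have hLval : ∫ ω, L ω ∂μ = 0 := by
    simp only [hLdef]
    rw [integral_finset_sum _ fun k _ => (hWint k).const_mul (bb k)]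
    refine Finset.sum_eq_zero fun k _ => ?_
    rw [integral_const_mul, MW1, mul_zero]
  have hLLval : ∫ ω, L ω * L ω ∂μ = 2 * ∑ k, bb k * bb k := by
    rw [heLL]
    rw [integral_finset_sum _ fun k _ =>
      integrable_finset_sum _ fun l _ => (hM2 k l).const_mul (bb k * bb l)]
    have hk : ∀ k : Fin D, ∫ ω, ∑ l, (bb k * bb l) * (W k ω * W l ω) ∂μ
        = 2 * (bb k * bb k) := by
      intro k
      rw [integral_finset_sum _ fun l _ => (hM2 k l).const_mul (bb k * bb l)]
      have hl : ∀ l, ∫ ω, (bb k * bb l) * (W k ω * W l ω) ∂μ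
          = (bb k * bb l) * (2 * e k l) := fun l => by
        rw [integral_const_mul, hEW2]
      rw [Finset.sum_congr rfl fun l _ => hl l]
      simp [hedef, mul_ite, Finset.sum_ite_eq, mul_comm]
    rw [Finset.sum_congr rfl fun k _ => hk k, ← Finset.mul_sum]
  have hQLval : ∫ ω, Q ω * L ω ∂μ = 0 := by
    rw [heQL]
    rw [integral_finset_sum _ fun k _ => integrable_finset_sum _ fun l _ =>
      integrable_finset_sum _ fun m _ => (hM3 k l m).const_mul _]
    refine Finset.sum_eq_zero fun k _ => ?_
    rw [integral_finset_sum _ fun l _ =>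
      integrable_finset_sum _ fun m _ => (hM3 k l m).const_mul _]
    refine Finset.sum_eq_zero fun l _ => ?_
    rw [integral_finset_sum _ fun m _ => (hM3 k l m).const_mul _]
    refine Finset.sum_eq_zero fun m _ => ?_
    rw [integral_const_mul, hEW3, mul_zero]
  have hQQval : ∫ ω, Q ω * Q ω ∂μ
      = 4 * (∑ k, A k k) ^ 2 + 4 * (∑ k, ∑ l, A k l * A k l)
        + 4 * (∑ k, ∑ l, A k l * A l k) + 2 * Δ₄ * (∑ k, A k k * A k k) := by
    rw [heQQ]
    rw [integral_finset_sum _ fun k _ => integrable_finset_sum _ fun m _ =>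
      integrable_finset_sum _ fun l _ =>
        integrable_finset_sum _ fun n _ => (hM4 k l m n).const_mul _]
    rw [Finset.sum_congr rfl fun k _ => integral_finset_sum _ fun m _ =>
      integrable_finset_sum _ fun l _ =>
        integrable_finset_sum _ fun n _ => (hM4 k l m n).const_mul _]
    rw [Finset.sum_congr rfl fun k _ => Finset.sum_congr rfl fun m _ =>
      integral_finset_sum _ fun l _ =>
        integrable_finset_sum _ fun n _ => (hM4 k l m n).const_mul _]
    rw [Finset.sum_congr rfl fun k _ => Finset.sum_congr rfl fun m _ =>
      Finset.sum_congr rfl fun l _ =>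
        integral_finset_sum _ fun n _ => (hM4 k l m n).const_mul _]
    have h1 : ∀ k m l n : Fin D,
        ∫ ω, (A k l * A m n) * (W k ω * W l ω * W m ω * W n ω) ∂μ
        = (A k l * A m n) * (4 * (e k l * e m n + e k m * e l n + e k n * e l m)
            + 2 * Δ₄ * (e k l * e k m * e k n)) := fun k m l n => by
      rw [integral_const_mul, hEW4]
    rw [Finset.sum_congr rfl fun k _ => Finset.sum_congr rfl fun m _ =>
      Finset.sum_congr rfl fun l _ => Finset.sum_congr rfl fun n _ => h1 k m l n]
    simp only [hedef]
    exact ALG D A Δ₄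
  -- assemble
  have hsplit : (fun ω => F ω ^ 2) = fun ω => Q ω * Q ω + 4 * (L ω * L ω) + 4 * (Q ω * L ω)
      + (2 * c) * Q ω + (4 * c) * L ω + c ^ 2 := by
    funext ω
    rw [hFQ ω]
    ring
  have a1 : Integrable (fun ω => Q ω * Q ω + 4 * (L ω * L ω)) μ :=
    hQQint.add (hLLint.const_mul 4)
  have a2 : Integrable (fun ω => Q ω * Q ω + 4 * (L ω * L ω) + 4 * (Q ω * L ω)) μ :=
    a1.add (hQLint.const_mul 4)
  have a3 : Integrable (fun ω => Q ω * Q ω + 4 * (L ω * L ω) + 4 * (Q ω * L ω)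
      + (2 * c) * Q ω) μ := a2.add (hQint.const_mul (2 * c))
  have a4 : Integrable (fun ω => Q ω * Q ω + 4 * (L ω * L ω) + 4 * (Q ω * L ω)
      + (2 * c) * Q ω + (4 * c) * L ω) μ := a3.add (hLint.const_mul (4 * c))
  have E1 : ∫ ω, (Q ω * Q ω + 4 * (L ω * L ω) + 4 * (Q ω * L ω)
        + (2 * c) * Q ω + (4 * c) * L ω + c ^ 2) ∂μ
      = (∫ ω, (Q ω * Q ω + 4 * (L ω * L ω) + 4 * (Q ω * L ω)
        + (2 * c) * Q ω + (4 * c) * L ω) ∂μ) + ∫ _ω, (c ^ 2 : ℝ) ∂μ :=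
    integral_add a4 (integrable_const _)
  have E2 : ∫ ω, (Q ω * Q ω + 4 * (L ω * L ω) + 4 * (Q ω * L ω)
        + (2 * c) * Q ω + (4 * c) * L ω) ∂μ
      = (∫ ω, (Q ω * Q ω + 4 * (L ω * L ω) + 4 * (Q ω * L ω) + (2 * c) * Q ω) ∂μ)
        + ∫ ω, (4 * c) * L ω ∂μ := integral_add a3 (hLint.const_mul _)
  have E3 : ∫ ω, (Q ω * Q ω + 4 * (L ω * L ω) + 4 * (Q ω * L ω) + (2 * c) * Q ω) ∂μ
      = (∫ ω, (Q ω * Q ω + 4 * (L ω * L ω) + 4 * (Q ω * L ω)) ∂μ)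
        + ∫ ω, (2 * c) * Q ω ∂μ := integral_add a2 (hQint.const_mul _)
  have E4 : ∫ ω, (Q ω * Q ω + 4 * (L ω * L ω) + 4 * (Q ω * L ω)) ∂μ
      = (∫ ω, (Q ω * Q ω + 4 * (L ω * L ω)) ∂μ) + ∫ ω, 4 * (Q ω * L ω) ∂μ :=
    integral_add a1 (hQLint.const_mul _)
  have E5 : ∫ ω, (Q ω * Q ω + 4 * (L ω * L ω)) ∂μ
      = (∫ ω, Q ω * Q ω ∂μ) + ∫ ω, 4 * (L ω * L ω) ∂μ :=
    integral_add hQQint (hLLint.const_mul _)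
  rw [hsplit, E1, E2, E3, E4, E5, integral_const_mul, integral_const_mul, integral_const_mul,
    integral_const_mul, hQQval, hLLval, hQLval, hQval, hLval, integral_const]
  simp only [measure_univ, ENNReal.toReal_one, probReal_univ, smul_eq_mul, one_mul]
  -- matrix identities
  have htrA : A.trace = S.trace := by
    rw [hAdef, Matrix.trace_mul_comm, hΓ]
  have htr2 : (∑ k, ∑ l, A k l * A l k) = (S ^ 2).trace := by
    have h1 : (∑ k, ∑ l, A k l * A l k) = (A * A).trace := by
      simp [Matrix.trace, Matrix.diag, Matrix.mul_apply]
    rw [h1, hAdef]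
    have h2 : Γ.transpose * Γ * (Γ.transpose * Γ) = Γ.transpose * (Γ * (Γ.transpose * Γ)) := by
      rw [Matrix.mul_assoc]
    rw [h2, Matrix.trace_mul_comm]
    have h3 : Γ * (Γ.transpose * Γ) * Γ.transpose = Γ * Γ.transpose * (Γ * Γ.transpose) := by
      rw [Matrix.mul_assoc, Matrix.mul_assoc, ← Matrix.mul_assoc]
    rw [h3, hΓ, pow_two]
  have htr2' : (∑ k, ∑ l, A k l * A k l) = (S ^ 2).trace := by
    rw [← htr2]
    exact Finset.sum_congr rfl fun k _ => Finset.sum_congr rfl fun l _ => by rw [← hAsym k l]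
  have hbS : (∑ k, bb k * bb k) = δ ⬝ᵥ S.mulVec δ := by
    rw [← hΓ, ← Matrix.mulVec_mulVec, dotProduct_mulVec, ← Matrix.mulVec_transpose]
    simp only [hbdef]
    simp [dotProduct]
  have hAS : (∑ k, A k k) = S.trace := by
    rw [← htrA]
    simp [Matrix.trace, Matrix.diag]
  have hAkk : (∑ k, A k k * A k k) = ∑ k, A k k ^ 2 :=
    Finset.sum_congr rfl fun k _ => (sq (A k k)).symm
  rw [htr2, htr2', hbS, hAS, hAkk, htrA]
  ring
end main

/-- With `X = ΓZ₁ + μ₁`, `Y = ΓZ₂ + μ₂`, where the `2D` coordinates of `Z₁, Z₂` are i.i.d.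
with mean 0, variance 1 and fourth moment `3 + Δ₄`, and `ΓΓᵀ = S`, `δ = μ₁ − μ₂`:
`E‖X − Y‖⁴ = 8·Tr(S²) + 2Δ₄·∑ₖ ((ΓᵀΓ)ₖₖ)² + 8·δᵀSδ + (2·Tr(S) + ‖δ‖²)²`. -/
theorem expected_fourth_dist {Ω : Type*} [MeasurableSpace Ω] (μ : Measure Ω)
    [IsProbabilityMeasure μ] {d D : ℕ}
    (Γ : Matrix (Fin d) (Fin D) ℝ) (S : Matrix (Fin d) (Fin d) ℝ)
    (hΓ : Γ * Γ.transpose = S)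
    (Z₁ Z₂ : Ω → Fin D → ℝ)
    (hmeas : ∀ p : Fin 2 × Fin D, Measurable fun ω => ![Z₁ ω, Z₂ ω] p.1 p.2)
    (hindep : iIndepFun
      (fun p : Fin 2 × Fin D => fun ω => ![Z₁ ω, Z₂ ω] p.1 p.2) μ)
    (hident : ∀ p q : Fin 2 × Fin D,
      IdentDistrib (fun ω => ![Z₁ ω, Z₂ ω] p.1 p.2) (fun ω => ![Z₁ ω, Z₂ ω] q.1 q.2) μ μ)
    (Δ₄ : ℝ)
    (hmean : ∀ p : Fin 2 × Fin D, ∫ ω, ![Z₁ ω, Z₂ ω] p.1 p.2 ∂μ = 0)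
    (hvar : ∀ p : Fin 2 × Fin D, ∫ ω, (![Z₁ ω, Z₂ ω] p.1 p.2) ^ 2 ∂μ = 1)
    (hL4 : ∀ p : Fin 2 × Fin D, Integrable (fun ω => (![Z₁ ω, Z₂ ω] p.1 p.2) ^ 4) μ)
    (hm4 : ∀ p : Fin 2 × Fin D, ∫ ω, (![Z₁ ω, Z₂ ω] p.1 p.2) ^ 4 ∂μ = 3 + Δ₄)
    (μ₁ μ₂ : Fin d → ℝ) (X Y : Ω → Fin d → ℝ)
    (hX : ∀ ω, X ω = Γ.mulVec (Z₁ ω) + μ₁)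
    (hY : ∀ ω, Y ω = Γ.mulVec (Z₂ ω) + μ₂)
    (δ : Fin d → ℝ) (hδ : δ = μ₁ - μ₂) :
    ∫ ω, (∑ i, (X ω i - Y ω i) ^ 2) ^ 2 ∂μ
      = 8 * (S ^ 2).trace + 2 * Δ₄ * (∑ k, ((Γ.transpose * Γ) k k) ^ 2)
        + 8 * (δ ⬝ᵥ S.mulVec δ) + (2 * S.trace + ∑ i, (δ i) ^ 2) ^ 2 := by
  have hF : ∀ ω, (∑ i, (X ω i - Y ω i) ^ 2)
      = ∑ i, ((∑ k, Γ i k * (Z₁ ω k - Z₂ ω k)) + δ i) ^ 2 := by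
    intro ω
    refine Finset.sum_congr rfl fun i _ => ?_
    congr 1
    rw [hX, hY, hδ]
    simp only [Pi.add_apply, Pi.sub_apply, Matrix.mulVec, dotProduct, mul_sub,
      Finset.sum_sub_distrib]
    ring
  exact aux_main (V := fun p ω => ![Z₁ ω, Z₂ ω] p.1 p.2) hmeas hindep hident Δ₄ hmean hvar
    hL4 hm4 (fun k ω => Z₁ ω k - Z₂ ω k) (fun k ω => rfl) Γ S hΓ δ
    (fun ω => ∑ i, (X ω i - Y ω i) ^ 2) hF
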